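/- Let K be a field, a, b, c ∈ K parameters, and (x, y, z) ∈ K³ with cx + a ≠ 0 and x² + a ≠ 0. Define y₁ = (x²z − x + az + c)/(cx + a) and z₁ = (cxy + x + ay − c)/(x² + a). Then x + y₁ + z₁ − x·y₁·z₁ = x + y + z − xyz and z₁(x + a·y₁) + bx + c·y₁ = z(x + ay) + bx + cy. -/

import Mathlib

/-- The map `R₁` of the polynomial-invariants example preserves both
invariants `I = x + y + z - xyz` and `J = z(x + ay) + bx + cy`. -/
theorem stmt_2 {K : Type*} [Field K] (a b c x y z : K)
    (h1 : c * x + a ≠ 0) (h2 : x ^ 2 + a ≠ 0) :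
    let y1 := (x ^ 2 * z - x + a * z + c) / (c * x + a)
    let z1 := (c * x * y + x + a * y - c) / (x ^ 2 + a)
    x + y1 + z1 - x * y1 * z1 = x + y + z - x * y * z ∧
    z1 * (x + a * y1) + b * x + c * y1 = z * (x + a * y) + b * x + c * y := by
  have h1' : x * c + a ≠ 0 := by rwa [mul_comm]
  constructor <;> field_simp <;> ring
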